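/- arXiv:1505.05552 — 3 statements merged into one kernel-verified Lean document; each statement's English description precedes it below -/
import Mathlib

section
/- Assume |E| > m. Then the radial system has no nonzero square-integrable solutions: if R = (R₁,R₂) : ℝ → ℂ² is differentiable, satisfies T_rad R = E R pointwise on ℝ, and ∫_ℝ (|R₁|² + |R₂|²) dr < ∞, then R is identically zero. (This expresses that the point spectrum of the zero-G Kerr–Newman Dirac Hamiltonian is confined to the gap [−m, m] of the continuous spectrum.) -/
/- STATEMENT 9: Assume |E| > m.  Then the radial system has no nonzero
square-integrable solutions: any differentiable R = (R₁,R₂) : ℝ → ℂ² with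
T_rad R = E R pointwise on ℝ and ∫_ℝ (|R₁|² + |R₂|²) dr < ∞ vanishes identically.
(The point spectrum of the zero-G Kerr–Newman Dirac Hamiltonian is confined to
the gap [−m, m] of the continuous spectrum.) -/

noncomputable section

open MeasureTheory

/-- V(r) = (−aκ + γ r)/ϖ² -/
def Vrad (a κ γv r : ℝ) : ℝ := (-(a*κ) + γv*r)/(r^2+a^2)
/-- P(r) = m r/ϖ -/
def Prad (a m r : ℝ) : ℝ := m*r/Real.sqrt (r^2+a^2)
/-- W(r) = λ/ϖ -/
def Wrad (a lam r : ℝ) : ℝ := lam/Real.sqrt (r^2+a^2)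

/-- the radial eigenvalue equations T_rad (R₁,R₂) = E (R₁,R₂) at r -/
def RadEq (a m lam κ γv E : ℝ) (R1 R2 : ℝ → ℂ) (r : ℝ) : Prop :=
  Complex.I * deriv R1 r - ((Vrad a κ γv r : ℝ) : ℂ) * R1 r
      - (((Prad a m r : ℝ) : ℂ) + Complex.I * ((Wrad a lam r : ℝ) : ℂ)) * R2 r
    = (E : ℂ) * R1 r ∧
  -Complex.I * deriv R2 r - ((Vrad a κ γv r : ℝ) : ℂ) * R2 r
      + (-((Prad a m r : ℝ) : ℂ) + Complex.I * ((Wrad a lam r : ℝ) : ℂ)) * R1 r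
    = (E : ℂ) * R2 r

lemma s_pos (a : ℝ) (ha : a ≠ 0) (r : ℝ) : 0 < r^2 + a^2 := by positivity

lemma sqrt_s_pos (a : ℝ) (ha : a ≠ 0) (r : ℝ) : 0 < Real.sqrt (r^2+a^2) :=
  Real.sqrt_pos.2 (s_pos a ha r)

lemma hasDerivAt_s (a r : ℝ) : HasDerivAt (fun t : ℝ => t^2 + a^2) (2*r) r := by
  simpa using (hasDerivAt_pow 2 r).add_const (a^2)

lemma hasDerivAt_sqrt_s (a : ℝ) (ha : a ≠ 0) (r : ℝ) :
    HasDerivAt (fun t : ℝ => Real.sqrt (t^2 + a^2)) (r / Real.sqrt (r^2+a^2)) r := by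
  have h := (hasDerivAt_s a r).sqrt (ne_of_gt (s_pos a ha r))
  convert h using 1
  have h2 : Real.sqrt (r^2+a^2) ≠ 0 := ne_of_gt (sqrt_s_pos a ha r)
  field_simp

lemma hasDerivAt_Prad (a : ℝ) (ha : a ≠ 0) (m r : ℝ) :
    HasDerivAt (Prad a m) (m*a^2/((r^2+a^2)*Real.sqrt (r^2+a^2))) r := by
  have hs := sqrt_s_pos a ha r
  have hsne : Real.sqrt (r^2+a^2) ≠ 0 := ne_of_gt hs
  have h := ((hasDerivAt_id r).const_mul m).div (hasDerivAt_sqrt_s a ha r) hsne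
  refine h.congr_deriv (Eq.symm ?_)
  have h2 : Real.sqrt (r^2+a^2) ^ 2 = r^2 + a^2 := Real.sq_sqrt (le_of_lt (s_pos a ha r))
  simp only [id_eq]
  rw [div_eq_div_iff (by positivity) (by positivity)]
  linear_combination (m*a^2 - m*(r^2+a^2)) * h2 + (m*r^2*(r^2+a^2)) * (mul_inv_cancel₀ hsne)

lemma hasDerivAt_Wrad (a : ℝ) (ha : a ≠ 0) (lam r : ℝ) :
    HasDerivAt (Wrad a lam) (-(lam*r)/((r^2+a^2)*Real.sqrt (r^2+a^2))) r := by
  have hs := sqrt_s_pos a ha r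
  have hsne : Real.sqrt (r^2+a^2) ≠ 0 := ne_of_gt hs
  have h := (hasDerivAt_const r lam).div (hasDerivAt_sqrt_s a ha r) hsne
  refine h.congr_deriv (Eq.symm ?_)
  have h2 : Real.sqrt (r^2+a^2) ^ 2 = r^2 + a^2 := Real.sq_sqrt (le_of_lt (s_pos a ha r))
  rw [div_eq_div_iff (by positivity) (by positivity)]
  linear_combination (-(lam*r)) * h2 + (lam*r*(a^2+r^2)) * (mul_inv_cancel₀ hsne)

lemma hasDerivAt_Vrad (a : ℝ) (ha : a ≠ 0) (κ γv r : ℝ) :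
    HasDerivAt (Vrad a κ γv) ((γv*(a^2-r^2) + 2*a*κ*r)/(r^2+a^2)^2) r := by
  have hsne : r^2 + a^2 ≠ 0 := ne_of_gt (s_pos a ha r)
  have h := (((hasDerivAt_id r).const_mul γv).const_add (-(a*κ))).div (hasDerivAt_s a r) hsne
  refine h.congr_deriv (Eq.symm ?_)
  simp only [id_eq]
  field_simp
  ring


lemma abs_le_sqrt_s (a r : ℝ) : |r| ≤ Real.sqrt (r^2+a^2) := by
  rw [← Real.sqrt_sq_eq_abs]
  exact Real.sqrt_le_sqrt (by nlinarith [sq_nonneg a])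

lemma abs_a_le_sqrt_s (a r : ℝ) : |a| ≤ Real.sqrt (r^2+a^2) := by
  rw [← Real.sqrt_sq_eq_abs]
  exact Real.sqrt_le_sqrt (by nlinarith [sq_nonneg r])

lemma abs_Prad_le (a : ℝ) (ha : a ≠ 0) (m r : ℝ) (hm : 0 ≤ m) : |Prad a m r| ≤ m := by
  have hs := sqrt_s_pos a ha r
  rw [Prad, abs_div, abs_of_pos hs, abs_mul, abs_of_nonneg hm, div_le_iff₀ hs]
  nlinarith [abs_le_sqrt_s a r, abs_nonneg r]

lemma abs_Wrad_le (a : ℝ) (ha : a ≠ 0) (lam r : ℝ) : |Wrad a lam r| ≤ |lam|/|a| := by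
  have hs := sqrt_s_pos a ha r
  rw [Wrad, abs_div, abs_of_pos hs]
  gcongr
  exact abs_a_le_sqrt_s a r

lemma abs_Vrad_le (a : ℝ) (ha : a ≠ 0) (κ γv r : ℝ) :
    |Vrad a κ γv r| ≤ |a*κ|/a^2 + |γv|/(2*|a|) := by
  have hs := s_pos a ha r
  have ha2 : (0:ℝ) < a^2 := by positivity
  have hA : (0:ℝ) < |a| := abs_pos.2 ha
  have h1 : |(-(a*κ))/(r^2+a^2)| ≤ |a*κ|/a^2 := by
    rw [abs_div, abs_of_pos hs, abs_neg]
    gcongr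
    nlinarith [sq_nonneg r]
  have h2 : |(γv*r)/(r^2+a^2)| ≤ |γv|/(2*|a|) := by
    rw [abs_div, abs_of_pos hs, abs_mul, div_le_div_iff₀ hs (by positivity)]
    nlinarith [sq_nonneg (|r| - |a|), sq_abs r, sq_abs a, abs_nonneg γv]
  calc |Vrad a κ γv r| = |(-(a*κ))/(r^2+a^2) + (γv*r)/(r^2+a^2)| := by
        rw [Vrad, add_div]
    _ ≤ |(-(a*κ))/(r^2+a^2)| + |(γv*r)/(r^2+a^2)| := abs_add_le _ _
    _ ≤ |a*κ|/a^2 + |γv|/(2*|a|) := add_le_add h1 h2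

lemma tail_bound (a : ℝ) (ha : a ≠ 0) (lam κ γv r : ℝ) (hr : 1 ≤ r) :
    |Vrad a κ γv r| + |Wrad a lam r| ≤ (|a*κ| + |γv| + |lam|)/r := by
  have hr0 : (0:ℝ) < r := lt_of_lt_of_le one_pos hr
  have hs := s_pos a ha r
  have hss := sqrt_s_pos a ha r
  have hrs : r ≤ Real.sqrt (r^2+a^2) := le_trans (le_abs_self r) (abs_le_sqrt_s a r)
  have hW : |Wrad a lam r| ≤ |lam|/r := by
    rw [Wrad, abs_div, abs_of_pos hss]
    gcongr
  have hV : |Vrad a κ γv r| ≤ (|a*κ| + |γv|)/r := by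
    rw [Vrad, abs_div, abs_of_pos hs, div_le_div_iff₀ hs hr0]
    have hnum : |(-(a*κ) + γv*r)| ≤ |a*κ| + |γv| * r := by
      calc |(-(a*κ) + γv*r)| ≤ |(-(a*κ))| + |γv*r| := abs_add_le _ _
        _ = |a*κ| + |γv| * r := by rw [abs_neg, abs_mul γv r, abs_of_pos hr0]
    nlinarith [mul_le_mul_of_nonneg_right hnum (le_of_lt hr0),
      mul_le_mul_of_nonneg_left (by nlinarith : r ≤ r^2) (abs_nonneg (a*κ)),
      mul_nonneg (abs_nonneg (a*κ)) (sq_nonneg a),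
      mul_nonneg (abs_nonneg γv) (sq_nonneg a)]
  calc |Vrad a κ γv r| + |Wrad a lam r| ≤ (|a*κ| + |γv|)/r + |lam|/r := add_le_add hV hW
    _ = (|a*κ| + |γv| + |lam|)/r := by ring


/-- the density dominating |P'| + |W'| + |V'|/2 for r ≥ 0 -/
def psiD (a m lam κ γv : ℝ) (r : ℝ) : ℝ :=
  m*a^2/((r^2+a^2)*Real.sqrt (r^2+a^2)) + |lam| * r/((r^2+a^2)*Real.sqrt (r^2+a^2))
  + |γv|/(2*(r^2+a^2)) + |a*κ| * r/(r^2+a^2)^2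

/-- a bounded antiderivative of psiD -/
def phiF (a m lam κ γv : ℝ) (r : ℝ) : ℝ :=
  m*r/Real.sqrt (r^2+a^2) - |lam|/Real.sqrt (r^2+a^2)
  + (|γv|/(2*|a|))*Real.arctan (r/|a|) - |a*κ|/(2*(r^2+a^2))

lemma hasDerivAt_phiF (a : ℝ) (ha : a ≠ 0) (m lam κ γv r : ℝ) :
    HasDerivAt (phiF a m lam κ γv) (psiD a m lam κ γv r) r := by
  have hs := s_pos a ha r
  have hA : (0:ℝ) < |a| := abs_pos.2 ha
  have hA2 : |a|^2 = a^2 := sq_abs a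
  have t1 := hasDerivAt_Prad a ha m r
  have t2 := hasDerivAt_Wrad a ha |lam| r
  have t3 : HasDerivAt (fun t : ℝ => (|γv|/(2*|a|))*Real.arctan (t/|a|))
      (|γv|/(2*(r^2+a^2))) r := by
    have h1 : HasDerivAt (fun t : ℝ => t/|a|) (1/|a|) r := by
      simpa using (hasDerivAt_id r).div_const |a|
    have h2 := (Real.hasDerivAt_arctan (r/|a|)).comp r h1
    have h3 := h2.const_mul (|γv|/(2*|a|))
    refine h3.congr_deriv (Eq.symm ?_)
    field_simp
    linear_combination |γv| * hA2
  have t4 : HasDerivAt (fun t : ℝ => |a*κ|/(2*(t^2+a^2))) (-(|a*κ| * r/(r^2+a^2)^2)) r := by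
    have h1 := (hasDerivAt_const r |a*κ|).div ((hasDerivAt_s a r).const_mul 2)
      (by positivity : (2:ℝ)*(r^2+a^2) ≠ 0)
    refine h1.congr_deriv (Eq.symm ?_)
    field_simp
    ring
  have h := (((t1.sub t2).add t3).sub t4)
  refine h.congr_deriv (Eq.symm ?_)
  unfold psiD
  ring

lemma psiD_nonneg (a : ℝ) (ha : a ≠ 0) (m lam κ γv r : ℝ) (hm : 0 ≤ m) (hr : 0 ≤ r) :
    0 ≤ psiD a m lam κ γv r := by
  have hs := le_of_lt (s_pos a ha r)
  have hss := le_of_lt (sqrt_s_pos a ha r)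
  unfold psiD
  positivity

lemma phiF_bound (a : ℝ) (ha : a ≠ 0) (m lam κ γv r : ℝ) (hm : 0 ≤ m) :
    |phiF a m lam κ γv r| ≤ m + |lam|/|a| + (|γv|/(2*|a|))*(Real.pi/2) + |a*κ|/(2*a^2) := by
  have hs := s_pos a ha r
  have hss := sqrt_s_pos a ha r
  have hA : (0:ℝ) < |a| := abs_pos.2 ha
  have b1 : |m*r/Real.sqrt (r^2+a^2)| ≤ m := abs_Prad_le a ha m r hm
  have b2 : |(|lam|/Real.sqrt (r^2+a^2))| ≤ |lam|/|a| := by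
    rw [abs_div, abs_abs, abs_of_pos hss]
    gcongr
    exact abs_a_le_sqrt_s a r
  have b3 : |(|γv|/(2*|a|))*Real.arctan (r/|a|)| ≤ (|γv|/(2*|a|))*(Real.pi/2) := by
    rw [abs_mul, abs_of_nonneg (by positivity : (0:ℝ) ≤ |γv|/(2*|a|))]
    gcongr
    exact abs_le.2 ⟨le_of_lt (Real.neg_pi_div_two_lt_arctan _),
      le_of_lt (Real.arctan_lt_pi_div_two _)⟩
  have b4 : |(|a*κ|/(2*(r^2+a^2)))| ≤ |a*κ|/(2*a^2) := by
    rw [abs_div, abs_abs, abs_of_pos (by positivity : (0:ℝ) < 2*(r^2+a^2))]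
    gcongr
    nlinarith [sq_nonneg r]
  unfold phiF
  set x1 := m*r/Real.sqrt (r^2+a^2)
  set x2 := |lam|/Real.sqrt (r^2+a^2)
  set x3 := (|γv|/(2*|a|))*Real.arctan (r/|a|)
  set x4 := |a*κ|/(2*(r^2+a^2))
  have e1 := le_abs_self x1; have e1' := neg_abs_le x1
  have e2 := le_abs_self x2; have e2' := neg_abs_le x2
  have e3 := le_abs_self x3; have e3' := neg_abs_le x3
  have e4 := le_abs_self x4; have e4' := neg_abs_le x4
  apply abs_le.2
  constructor <;> [nlinarith; nlinarith]


def Ff (R1 R2 : ℝ → ℂ) (r : ℝ) : ℝ := (R1 r).re^2 + (R1 r).im^2 + (R2 r).re^2 + (R2 r).im^2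
def Xf (R1 R2 : ℝ → ℂ) (r : ℝ) : ℝ := (R1 r).re*(R2 r).re + (R1 r).im*(R2 r).im
def Yf (R1 R2 : ℝ → ℂ) (r : ℝ) : ℝ := (R1 r).re*(R2 r).im - (R1 r).im*(R2 r).re

lemma system_deriv (a m lam κ γv E : ℝ) (R1 R2 : ℝ → ℂ)
    (hR1 : Differentiable ℝ R1) (hR2 : Differentiable ℝ R2)
    (heq : ∀ r : ℝ, RadEq a m lam κ γv E R1 R2 r) (r : ℝ) :
    HasDerivAt (Ff R1 R2) (4*Wrad a lam r * Xf R1 R2 r + 4*Prad a m r * Yf R1 R2 r) r ∧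
    HasDerivAt (Xf R1 R2) (-2*(E + Vrad a κ γv r)*Yf R1 R2 r + Wrad a lam r * Ff R1 R2 r) r ∧
    HasDerivAt (Yf R1 R2) (2*(E + Vrad a κ γv r)*Xf R1 R2 r + Prad a m r * Ff R1 R2 r) r := by
  obtain ⟨h1, h2⟩ := heq r
  have e1re := congrArg Complex.re h1
  have e1im := congrArg Complex.im h1
  have e2re := congrArg Complex.re h2
  have e2im := congrArg Complex.im h2
  simp only [Complex.add_re, Complex.add_im, Complex.sub_re, Complex.sub_im,
    Complex.mul_re, Complex.mul_im, Complex.I_re, Complex.I_im, Complex.ofReal_re,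
    Complex.ofReal_im, Complex.neg_re, Complex.neg_im] at e1re e1im e2re e2im
  have f1 : (deriv R1 r).re = (E + Vrad a κ γv r)*(R1 r).im + Wrad a lam r*(R2 r).re
      + Prad a m r*(R2 r).im := by linear_combination e1im
  have f2 : (deriv R1 r).im = -(E + Vrad a κ γv r)*(R1 r).re + Wrad a lam r*(R2 r).im
      - Prad a m r*(R2 r).re := by linear_combination -(1:ℝ)*e1re
  have f3 : (deriv R2 r).re = -(E + Vrad a κ γv r)*(R2 r).im + Wrad a lam r*(R1 r).re
      - Prad a m r*(R1 r).im := by linear_combination -(1:ℝ)*e2im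
  have f4 : (deriv R2 r).im = (E + Vrad a κ γv r)*(R2 r).re + Wrad a lam r*(R1 r).im
      + Prad a m r*(R1 r).re := by linear_combination e2re
  have hu1 : HasDerivAt (fun t => (R1 t).re) ((deriv R1 r).re) r := by
    exact Complex.reCLM.hasFDerivAt.comp_hasDerivAt r (hR1 r).hasDerivAt
  have hv1 : HasDerivAt (fun t => (R1 t).im) ((deriv R1 r).im) r := by
    exact Complex.imCLM.hasFDerivAt.comp_hasDerivAt r (hR1 r).hasDerivAt
  have hu2 : HasDerivAt (fun t => (R2 t).re) ((deriv R2 r).re) r := by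
    exact Complex.reCLM.hasFDerivAt.comp_hasDerivAt r (hR2 r).hasDerivAt
  have hv2 : HasDerivAt (fun t => (R2 t).im) ((deriv R2 r).im) r := by
    exact Complex.imCLM.hasFDerivAt.comp_hasDerivAt r (hR2 r).hasDerivAt
  refine ⟨?_, ?_, ?_⟩
  · have h := (((hu1.pow 2).add (hv1.pow 2)).add ((hu2.pow 2).add (hv2.pow 2)))
    have hfun : Ff R1 R2 = (fun x => (R1 x).re ^ 2 + (R1 x).im ^ 2
        + ((R2 x).re ^ 2 + (R2 x).im ^ 2)) := by
      funext t; unfold Ff; ring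
    rw [hfun]
    refine h.congr_deriv (Eq.symm ?_)
    rw [f1, f2, f3, f4]
    unfold Xf Yf
    push_cast
    ring
  · have h := (hu1.mul hu2).add (hv1.mul hv2)
    have hfun : Xf R1 R2 = (fun x => (R1 x).re * (R2 x).re + (R1 x).im * (R2 x).im) := by
      funext t; unfold Xf; ring
    rw [hfun]
    refine h.congr_deriv (Eq.symm ?_)
    rw [f1, f2, f3, f4]
    unfold Ff Yf
    ring
  · have h := (hu1.mul hv2).sub (hv1.mul hu2)
    have hfun : Yf R1 R2 = (fun x => (R1 x).re * (R2 x).im - (R1 x).im * (R2 x).re) := by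
      funext t; unfold Yf; ring
    rw [hfun]
    refine h.congr_deriv (Eq.symm ?_)
    rw [f1, f2, f3, f4]
    unfold Ff Xf
    ring


lemma mono_Ici_of_hasDerivAt (G g : ℝ → ℝ) (hG : ∀ r, HasDerivAt G (g r) r) (T : ℝ)
    (hg : ∀ r, T ≤ r → 0 ≤ g r) : MonotoneOn G (Set.Ici T) := by
  apply monotoneOn_of_deriv_nonneg (convex_Ici T)
  · exact (Differentiable.continuous (fun r => (hG r).differentiableAt)).continuousOn
  · exact fun r _ => ((hG r).differentiableAt).differentiableWithinAt
  · intro r hr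
    rw [interior_Ici] at hr
    rw [(hG r).deriv]
    exact hg r (le_of_lt hr)

lemma mono_of_hasDerivAt (G g : ℝ → ℝ) (hG : ∀ r, HasDerivAt G (g r) r)
    (hg : ∀ r, 0 ≤ g r) : Monotone G := by
  apply monotone_of_deriv_nonneg (fun r => (hG r).differentiableAt)
  intro r; rw [(hG r).deriv]; exact hg r

lemma no_int (f : ℝ → ℝ) (hf : Integrable f) (ε T : ℝ) (hε : 0 < ε)
    (h : ∀ r, T ≤ r → ε ≤ f r) : False := by
  have h1 : IntegrableOn f (Set.Ici T) := hf.integrableOn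
  have h2 : Integrable (fun _ : ℝ => ε) (volume.restrict (Set.Ici T)) := by
    apply MeasureTheory.Integrable.mono h1 aestronglyMeasurable_const
    refine (ae_restrict_iff' measurableSet_Ici).2 (Filter.Eventually.of_forall fun r hr => ?_)
    rw [Real.norm_eq_abs, Real.norm_eq_abs, abs_of_pos hε]
    exact le_trans (h r hr) (le_abs_self _)
  rcases integrable_const_iff.1 h2 with h' | h'
  · exact absurd h' (ne_of_gt hε)
  · rw [isFiniteMeasure_restrict, Real.volume_Ici] at h'
    exact absurd h' (by simp)

lemma psi_dominates (a : ℝ) (ha : a ≠ 0) (m lam κ γv r : ℝ) (hm : 0 ≤ m) (hr : 0 ≤ r) :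
    |m*a^2/((r^2+a^2)*Real.sqrt (r^2+a^2))| + |(-(lam*r))/((r^2+a^2)*Real.sqrt (r^2+a^2))|
      + |(γv*(a^2-r^2) + 2*a*κ*r)/(r^2+a^2)^2|/2 ≤ psiD a m lam κ γv r := by
  have hs := s_pos a ha r
  have hss := sqrt_s_pos a ha r
  have d : (0:ℝ) < (r^2+a^2)*Real.sqrt (r^2+a^2) := by positivity
  have t1 : |m*a^2/((r^2+a^2)*Real.sqrt (r^2+a^2))| = m*a^2/((r^2+a^2)*Real.sqrt (r^2+a^2)) :=
    abs_of_nonneg (by positivity)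
  have t2 : |(-(lam*r))/((r^2+a^2)*Real.sqrt (r^2+a^2))|
      = |lam| * r/((r^2+a^2)*Real.sqrt (r^2+a^2)) := by
    rw [abs_div, abs_of_pos d, abs_neg, abs_mul, abs_of_nonneg hr]
  have t3 : |(γv*(a^2-r^2) + 2*a*κ*r)/(r^2+a^2)^2|/2
      ≤ |γv|/(2*(r^2+a^2)) + |a*κ| * r/(r^2+a^2)^2 := by
    have hnum : |γv*(a^2-r^2) + 2*a*κ*r| ≤ |γv| *(r^2+a^2) + 2*|a*κ| * r := by
      have hx : |2*a*κ*r| = 2*|a*κ| * r := by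
        rw [show (2:ℝ)*a*κ*r = 2*((a*κ)*r) by ring, abs_mul, abs_mul, abs_of_nonneg hr, abs_two]
        ring
      have h2 : |a^2 - r^2| ≤ r^2+a^2 := by
        rw [abs_le]; constructor <;> nlinarith [sq_nonneg r, sq_nonneg a]
      calc |γv*(a^2-r^2) + 2*a*κ*r| ≤ |γv*(a^2-r^2)| + |2*a*κ*r| := abs_add_le _ _
        _ ≤ |γv| *(r^2+a^2) + 2*|a*κ| * r := by
            rw [abs_mul, hx]
            nlinarith [abs_nonneg γv, mul_le_mul_of_nonneg_left h2 (abs_nonneg γv)]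
    have heq2 : (|γv| *(r^2+a^2) + 2*|a*κ| * r)/(r^2+a^2)^2/2
        = |γv|/(2*(r^2+a^2)) + |a*κ| * r/(r^2+a^2)^2 := by
      field_simp
    calc |(γv*(a^2-r^2) + 2*a*κ*r)/(r^2+a^2)^2|/2
        = (|γv*(a^2-r^2) + 2*a*κ*r|/(r^2+a^2)^2)/2 := by
          rw [abs_div, abs_of_pos (by positivity : (0:ℝ) < (r^2+a^2)^2)]
      _ ≤ ((|γv| *(r^2+a^2) + 2*|a*κ| * r)/(r^2+a^2)^2)/2 := by gcongr
      _ = |γv|/(2*(r^2+a^2)) + |a*κ| * r/(r^2+a^2)^2 := heq2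
  unfold psiD
  rw [t1, t2]
  linarith [t3]


set_option maxHeartbeats 1000000

theorem no_square_integrable_radial_solution_outside_gap
    (a m lam κ γv E : ℝ) (ha : a ≠ 0) (hm : 0 < m) (hE : m < |E|)
    (R1 R2 : ℝ → ℂ)
    (hR1 : Differentiable ℝ R1) (hR2 : Differentiable ℝ R2)
    (heq : ∀ r : ℝ, RadEq a m lam κ γv E R1 R2 r)
    (hL2 : Integrable (fun r => ‖R1 r‖^2 + ‖R2 r‖^2)) :
    ∀ r : ℝ, R1 r = 0 ∧ R2 r = 0 := by
  have hm0 : 0 ≤ m := le_of_lt hm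
  have hsys := system_deriv a m lam κ γv E R1 R2 hR1 hR2 heq
  -- integrability of Ff
  have hFeq : (fun r => ‖R1 r‖^2 + ‖R2 r‖^2) = Ff R1 R2 := by
    funext t
    have h1 : ∀ z : ℂ, ‖z‖^2 = z.re^2 + z.im^2 := fun z => by
      rw [Complex.sq_norm, Complex.normSq_apply]; ring
    unfold Ff; rw [h1, h1]; ring
  rw [hFeq] at hL2
  have hFnn : ∀ t, 0 ≤ Ff R1 R2 t := fun t => by unfold Ff; positivity
  have hxF : ∀ t, |Xf R1 R2 t| ≤ Ff R1 R2 t / 2 := by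
    intro t; unfold Xf Ff
    rw [abs_le]
    constructor <;> nlinarith [sq_nonneg ((R1 t).re - (R2 t).re),
      sq_nonneg ((R1 t).re + (R2 t).re), sq_nonneg ((R1 t).im - (R2 t).im),
      sq_nonneg ((R1 t).im + (R2 t).im)]
  have hyF : ∀ t, |Yf R1 R2 t| ≤ Ff R1 R2 t / 2 := by
    intro t; unfold Yf Ff
    rw [abs_le]
    constructor <;> nlinarith [sq_nonneg ((R1 t).re - (R2 t).im),
      sq_nonneg ((R1 t).re + (R2 t).im), sq_nonneg ((R1 t).im - (R2 t).re),
      sq_nonneg ((R1 t).im + (R2 t).re)]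
  -- sign and constants
  have habsE : 0 < |E| := lt_trans hm hE
  set sg : ℝ := if 0 < E then 1 else -1 with hsgdef
  have hsgcases : sg = 1 ∧ E = |E| ∨ sg = -1 ∧ E = -|E| := by
    by_cases h : 0 < E
    · exact Or.inl ⟨if_pos h, (abs_of_pos h).symm⟩
    · refine Or.inr ⟨if_neg h, ?_⟩
      have hEne : E ≠ 0 := fun h0 => by rw [h0] at habsE; simp at habsE
      have hE' : E < 0 := lt_of_le_of_ne (not_lt.1 h) hEne
      rw [abs_of_neg hE']; ring
  clear_value sg
  have hsgabs : |sg| = 1 := by rcases hsgcases with ⟨h1, _⟩ | ⟨h1, _⟩ <;> rw [h1] <;> norm_num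
  have hsgE : sg * E = |E| := by rcases hsgcases with ⟨h1, h2⟩ | ⟨h1, h2⟩ <;> rw [h1] <;> linarith
  set δ : ℝ := (|E| - m)/4 with hδdef
  set Wb : ℝ := |lam|/|a| with hWbdef
  set Vb : ℝ := |a*κ|/a^2 + |γv|/(2*|a|) with hVbdef
  set C : ℝ := (m + Wb + |E| + Vb)/2 + 1 with hCdef
  set T : ℝ := max 1 (2*(|a*κ| + |γv| + |lam|)/(|E| - m) + 1) with hTdef
  have hT1 : (1:ℝ) ≤ T := le_max_left _ _
  have hTmax : 2*(|a*κ| + |γv| + |lam|)/(|E| - m) + 1 ≤ T := le_max_right _ _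
  clear_value δ Wb Vb C T
  have hδ : 0 < δ := by rw [hδdef]; linarith
  have hWb0 : 0 ≤ Wb := by rw [hWbdef]; positivity
  have hVb0 : 0 ≤ Vb := by rw [hVbdef]; positivity
  have hC : 0 < C := by rw [hCdef]; positivity
  have hEm : (0:ℝ) < |E| - m := by linarith
  have hTtail : ∀ t, T ≤ t → |Vrad a κ γv t| + |Wrad a lam t| ≤ (|E| - m)/2 := by
    intro t ht
    have h1t : (1:ℝ) ≤ t := le_trans hT1 ht
    have ht0 : (0:ℝ) < t := lt_of_lt_of_le one_pos h1t
    have htb := tail_bound a ha lam κ γv t h1t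
    have hT2 : 2*(|a*κ| + |γv| + |lam|)/(|E| - m) + 1 ≤ t := le_trans hTmax ht
    have hBt : (|a*κ| + |γv| + |lam|)/t ≤ (|E| - m)/2 := by
      rw [div_le_div_iff₀ ht0 (by norm_num : (0:ℝ) < 2)]
      have hkey : (|E| - m)*(2*(|a*κ| + |γv| + |lam|)/(|E| - m)) = 2*(|a*κ| + |γv| + |lam|) := by
        field_simp
      linarith [mul_le_mul_of_nonneg_left hT2 (le_of_lt hEm), hkey, hEm]
    linarith
  -- product bounds
  have hPXb : ∀ t, |Prad a m t * Xf R1 R2 t| ≤ m * (Ff R1 R2 t/2) := fun t => by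
    rw [abs_mul]
    exact mul_le_mul (abs_Prad_le a ha m t hm0) (hxF t) (abs_nonneg _) hm0
  have hPYb : ∀ t, |Prad a m t * Yf R1 R2 t| ≤ m * (Ff R1 R2 t/2) := fun t => by
    rw [abs_mul]
    exact mul_le_mul (abs_Prad_le a ha m t hm0) (hyF t) (abs_nonneg _) hm0
  have hWXb : ∀ t, |Wrad a lam t * Xf R1 R2 t| ≤ Wb * (Ff R1 R2 t/2) := fun t => by
    rw [abs_mul, hWbdef]
    exact mul_le_mul (abs_Wrad_le a ha lam t) (hxF t) (abs_nonneg _) (by positivity)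
  have hWYb : ∀ t, |Wrad a lam t * Yf R1 R2 t| ≤ Wb * (Ff R1 R2 t/2) := fun t => by
    rw [abs_mul, hWbdef]
    exact mul_le_mul (abs_Wrad_le a ha lam t) (hyF t) (abs_nonneg _) (by positivity)
  have hVFb : ∀ t, |Vrad a κ γv t| ≤ Vb := fun t => hVbdef ▸ abs_Vrad_le a ha κ γv t
  -- the Lyapunov function H
  set H : ℝ → ℝ := fun t => sg * (Prad a m t * Xf R1 R2 t - Wrad a lam t * Yf R1 R2 t
    + (E + Vrad a κ γv t)/2 * Ff R1 R2 t) with hHdef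
  clear_value H
  have hHabs : ∀ t, |H t| = |Prad a m t * Xf R1 R2 t - Wrad a lam t * Yf R1 R2 t
      + (E + Vrad a κ γv t)/2 * Ff R1 R2 t| := fun t => by
    rw [hHdef]; rw [abs_mul, hsgabs, one_mul]
  have hHC : ∀ t, H t ≤ C * Ff R1 R2 t := by
    intro t
    have h3 : |(E + Vrad a κ γv t)/2 * Ff R1 R2 t| ≤ (|E| + Vb)/2 * Ff R1 R2 t := by
      rw [abs_mul, abs_of_nonneg (hFnn t)]
      apply mul_le_mul_of_nonneg_right _ (hFnn t)
      rw [abs_div, abs_two]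
      have : |E + Vrad a κ γv t| ≤ |E| + Vb :=
        le_trans (abs_add_le E _) (by linarith [hVFb t])
      linarith
    have htri : |Prad a m t * Xf R1 R2 t - Wrad a lam t * Yf R1 R2 t
        + (E + Vrad a κ γv t)/2 * Ff R1 R2 t|
        ≤ |Prad a m t * Xf R1 R2 t| + |Wrad a lam t * Yf R1 R2 t|
          + |(E + Vrad a κ γv t)/2 * Ff R1 R2 t| := by
      have h := abs_add_three (Prad a m t * Xf R1 R2 t) (-(Wrad a lam t * Yf R1 R2 t))
        ((E + Vrad a κ γv t)/2 * Ff R1 R2 t)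
      rw [abs_neg] at h
      have heqq : Prad a m t * Xf R1 R2 t - Wrad a lam t * Yf R1 R2 t
          + (E + Vrad a κ γv t)/2 * Ff R1 R2 t
          = Prad a m t * Xf R1 R2 t + -(Wrad a lam t * Yf R1 R2 t)
          + (E + Vrad a κ γv t)/2 * Ff R1 R2 t := by ring
      rw [heqq]
      exact h
    calc H t ≤ |H t| := le_abs_self _
      _ = _ := hHabs t
      _ ≤ |Prad a m t * Xf R1 R2 t| + |Wrad a lam t * Yf R1 R2 t|
          + |(E + Vrad a κ γv t)/2 * Ff R1 R2 t| := htri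
      _ ≤ m * (Ff R1 R2 t/2) + Wb * (Ff R1 R2 t/2) + (|E| + Vb)/2 * Ff R1 R2 t := by
          linarith [hPXb t, hWYb t, h3]
      _ ≤ C * Ff R1 R2 t := by rw [hCdef]; linarith [hFnn t]
  -- lower bound on the tail
  have hδH : ∀ t, T ≤ t → δ * Ff R1 R2 t ≤ H t := by
    intro t ht
    have htail := hTtail t ht
    have e1 : -(m*(Ff R1 R2 t/2)) ≤ sg*(Prad a m t * Xf R1 R2 t) := by
      have h := neg_abs_le (sg*(Prad a m t * Xf R1 R2 t))
      rw [abs_mul, hsgabs, one_mul] at h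
      linarith [hPXb t]
    have e2 : sg*(Wrad a lam t * Yf R1 R2 t) ≤ |Wrad a lam t| * (Ff R1 R2 t/2) := by
      have h := le_abs_self (sg*(Wrad a lam t * Yf R1 R2 t))
      rw [abs_mul, hsgabs, one_mul, abs_mul] at h
      calc sg*(Wrad a lam t * Yf R1 R2 t) ≤ |Wrad a lam t| * |Yf R1 R2 t| := h
        _ ≤ |Wrad a lam t| * (Ff R1 R2 t/2) :=
            mul_le_mul_of_nonneg_left (hyF t) (abs_nonneg _)
    have e4 : -(|Vrad a κ γv t| * Ff R1 R2 t) ≤ sg*(Vrad a κ γv t)*Ff R1 R2 t := by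
      have h := neg_abs_le (sg*(Vrad a κ γv t))
      rw [abs_mul, hsgabs, one_mul] at h
      have := mul_le_mul_of_nonneg_right h (hFnn t)
      linarith
    have e5 : (|Vrad a κ γv t| + |Wrad a lam t|) * Ff R1 R2 t ≤ (|E| - m)/2 * Ff R1 R2 t :=
      mul_le_mul_of_nonneg_right htail (hFnn t)
    have e6 : sg*E*Ff R1 R2 t = |E| * Ff R1 R2 t := by rw [hsgE]
    have hHexp : H t = sg*(Prad a m t * Xf R1 R2 t) - sg*(Wrad a lam t * Yf R1 R2 t)
        + (sg*E*Ff R1 R2 t)/2 + sg*(Vrad a κ γv t)*Ff R1 R2 t/2 := by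
      rw [hHdef]; ring
    rw [hHexp, hδdef]
    linarith [e1, e2, e4, e5, e6, hFnn t]
  -- derivative of H
  have hHder : ∀ t, HasDerivAt H (sg*((m*a^2/((t^2+a^2)*Real.sqrt (t^2+a^2))) * Xf R1 R2 t
      - (-(lam*t)/((t^2+a^2)*Real.sqrt (t^2+a^2))) * Yf R1 R2 t
      + ((γv*(a^2-t^2) + 2*a*κ*t)/(t^2+a^2)^2)/2 * Ff R1 R2 t)) t := by
    intro t
    obtain ⟨hF', hX', hY'⟩ := hsys t
    have hP' := hasDerivAt_Prad a ha m t
    have hW' := hasDerivAt_Wrad a ha lam t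
    have hV' := hasDerivAt_Vrad a ha κ γv t
    have h := ((((hP'.mul hX').sub (hW'.mul hY')).add
      (((hV'.const_add E).div_const 2).mul hF')).const_mul sg)
    rw [hHdef]
    refine h.congr_deriv (Eq.symm ?_)
    ring
  -- exponential weight
  set φ : ℝ → ℝ := fun t => (1/δ) * phiF a m lam κ γv t with hφdef
  clear_value φ
  have hφder : ∀ t, HasDerivAt φ ((1/δ) * psiD a m lam κ γv t) t := by
    intro t
    rw [hφdef]
    exact (hasDerivAt_phiF a ha m lam κ γv t).const_mul (1/δ)
  set Φ : ℝ := (1/δ)*(m + |lam|/|a| + (|γv|/(2*|a|))*(Real.pi/2) + |a*κ|/(2*a^2)) with hΦdef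
  clear_value Φ
  have hφbound : ∀ t, |φ t| ≤ Φ := by
    intro t
    rw [hφdef, hΦdef, abs_mul, abs_of_pos (by positivity : (0:ℝ) < 1/δ)]
    exact mul_le_mul_of_nonneg_left (phiF_bound a ha m lam κ γv t hm0) (by positivity)
  -- G = H * exp φ is monotone on [T, ∞)
  set G : ℝ → ℝ := fun t => H t * Real.exp (φ t) with hGdef
  clear_value G
  have hGder : ∀ t, HasDerivAt G
      ((sg*((m*a^2/((t^2+a^2)*Real.sqrt (t^2+a^2))) * Xf R1 R2 t
      - (-(lam*t)/((t^2+a^2)*Real.sqrt (t^2+a^2))) * Yf R1 R2 t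
      + ((γv*(a^2-t^2) + 2*a*κ*t)/(t^2+a^2)^2)/2 * Ff R1 R2 t)) * Real.exp (φ t)
      + H t * (Real.exp (φ t) * ((1/δ) * psiD a m lam κ γv t))) t := by
    intro t
    rw [hGdef]
    exact (hHder t).mul ((hφder t).exp)
  have hGmono : MonotoneOn G (Set.Ici T) := by
    apply mono_Ici_of_hasDerivAt G _ hGder T
    intro t ht
    have h1t : (1:ℝ) ≤ t := le_trans hT1 ht
    have ht0 : (0:ℝ) ≤ t := le_trans zero_le_one h1t
    have hdom := psi_dominates a ha m lam κ γv t hm0 ht0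
    have hψ0 := psiD_nonneg a ha m lam κ γv t hm0 ht0
    have hA1 : |(m*a^2/((t^2+a^2)*Real.sqrt (t^2+a^2))) * Xf R1 R2 t|
        ≤ |m*a^2/((t^2+a^2)*Real.sqrt (t^2+a^2))| * Ff R1 R2 t := by
      rw [abs_mul]
      apply mul_le_mul_of_nonneg_left _ (abs_nonneg _)
      linarith [hxF t, hFnn t]
    have hA2 : |(-(lam*t)/((t^2+a^2)*Real.sqrt (t^2+a^2))) * Yf R1 R2 t|
        ≤ |(-(lam*t))/((t^2+a^2)*Real.sqrt (t^2+a^2))| * Ff R1 R2 t := by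
      rw [abs_mul]
      apply mul_le_mul_of_nonneg_left _ (abs_nonneg _)
      linarith [hyF t, hFnn t]
    have hHd : -(psiD a m lam κ γv t * Ff R1 R2 t)
        ≤ sg*((m*a^2/((t^2+a^2)*Real.sqrt (t^2+a^2))) * Xf R1 R2 t
          - (-(lam*t)/((t^2+a^2)*Real.sqrt (t^2+a^2))) * Yf R1 R2 t
          + ((γv*(a^2-t^2) + 2*a*κ*t)/(t^2+a^2)^2)/2 * Ff R1 R2 t) := by
      have h := neg_abs_le (sg*((m*a^2/((t^2+a^2)*Real.sqrt (t^2+a^2))) * Xf R1 R2 t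
          - (-(lam*t)/((t^2+a^2)*Real.sqrt (t^2+a^2))) * Yf R1 R2 t
          + ((γv*(a^2-t^2) + 2*a*κ*t)/(t^2+a^2)^2)/2 * Ff R1 R2 t))
      rw [abs_mul, hsgabs, one_mul] at h
      have htri := abs_add_three ((m*a^2/((t^2+a^2)*Real.sqrt (t^2+a^2))) * Xf R1 R2 t)
        (-((-(lam*t)/((t^2+a^2)*Real.sqrt (t^2+a^2))) * Yf R1 R2 t))
        (((γv*(a^2-t^2) + 2*a*κ*t)/(t^2+a^2)^2)/2 * Ff R1 R2 t)
      rw [abs_neg] at htri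
      have h3 : |((γv*(a^2-t^2) + 2*a*κ*t)/(t^2+a^2)^2)/2 * Ff R1 R2 t|
          = |(γv*(a^2-t^2) + 2*a*κ*t)/(t^2+a^2)^2|/2 * Ff R1 R2 t := by
        rw [abs_mul, abs_of_nonneg (hFnn t), abs_div, abs_two]
      have heqq : (m*a^2/((t^2+a^2)*Real.sqrt (t^2+a^2))) * Xf R1 R2 t
          - (-(lam*t)/((t^2+a^2)*Real.sqrt (t^2+a^2))) * Yf R1 R2 t
          + ((γv*(a^2-t^2) + 2*a*κ*t)/(t^2+a^2)^2)/2 * Ff R1 R2 t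
          = (m*a^2/((t^2+a^2)*Real.sqrt (t^2+a^2))) * Xf R1 R2 t
          + -((-(lam*t)/((t^2+a^2)*Real.sqrt (t^2+a^2))) * Yf R1 R2 t)
          + ((γv*(a^2-t^2) + 2*a*κ*t)/(t^2+a^2)^2)/2 * Ff R1 R2 t := by ring
      rw [heqq] at h
      have hcomb : |(m*a^2/((t^2+a^2)*Real.sqrt (t^2+a^2))) * Xf R1 R2 t
          + -((-(lam*t)/((t^2+a^2)*Real.sqrt (t^2+a^2))) * Yf R1 R2 t)
          + ((γv*(a^2-t^2) + 2*a*κ*t)/(t^2+a^2)^2)/2 * Ff R1 R2 t|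
          ≤ psiD a m lam κ γv t * Ff R1 R2 t := by
        calc _ ≤ _ := htri
          _ ≤ |m*a^2/((t^2+a^2)*Real.sqrt (t^2+a^2))| * Ff R1 R2 t
              + |(-(lam*t))/((t^2+a^2)*Real.sqrt (t^2+a^2))| * Ff R1 R2 t
              + |(γv*(a^2-t^2) + 2*a*κ*t)/(t^2+a^2)^2|/2 * Ff R1 R2 t := by
              rw [h3]; linarith [hA1, hA2]
          _ ≤ psiD a m lam κ γv t * Ff R1 R2 t := by
              linarith [mul_le_mul_of_nonneg_right hdom (hFnn t)]
      rw [heqq]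
      linarith [h, hcomb]
    have hδF := hδH t ht
    have h0 : 0 ≤ (1/δ) * psiD a m lam κ γv t := by positivity
    have h1 := mul_le_mul_of_nonneg_left hδF h0
    have h2 : (1/δ) * psiD a m lam κ γv t * (δ * Ff R1 R2 t)
        = psiD a m lam κ γv t * Ff R1 R2 t := by
      field_simp
    have key : 0 ≤ sg*((m*a^2/((t^2+a^2)*Real.sqrt (t^2+a^2))) * Xf R1 R2 t
        - (-(lam*t)/((t^2+a^2)*Real.sqrt (t^2+a^2))) * Yf R1 R2 t
        + ((γv*(a^2-t^2) + 2*a*κ*t)/(t^2+a^2)^2)/2 * Ff R1 R2 t)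
        + H t * ((1/δ) * psiD a m lam κ γv t) := by
      linarith [hHd, h1, h2]
    have hexp0 : (0:ℝ) < Real.exp (φ t) := Real.exp_pos _
    linarith [mul_nonneg key (le_of_lt hexp0)]
  -- the tail vanishes
  have hTail : ∀ t, T ≤ t → Ff R1 R2 t = 0 := by
    intro t0 ht0
    have hH0 : H t0 ≤ 0 := by
      by_contra hpos
      push_neg at hpos
      have hεpos : 0 < H t0 * Real.exp (-(2*Φ)) / C := by positivity
      apply no_int (Ff R1 R2) hL2 (H t0 * Real.exp (-(2*Φ)) / C) t0 hεpos
      intro t ht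
      have htT : T ≤ t := le_trans ht0 ht
      have h1 : G t0 ≤ G t := hGmono (Set.mem_Ici.2 ht0) (Set.mem_Ici.2 htT) ht
      have h2 : H t0 * Real.exp (φ t0) * Real.exp (-(φ t)) ≤ H t := by
        have hmul := mul_le_mul_of_nonneg_right h1 (le_of_lt (Real.exp_pos (-(φ t))))
        simp only [hGdef] at hmul
        have hre : H t * Real.exp (φ t) * Real.exp (-(φ t)) = H t := by
          rw [mul_assoc, ← Real.exp_add]; simp
        linarith [hmul, hre]
      have h3 : Real.exp (-(2*Φ)) ≤ Real.exp (φ t0) * Real.exp (-(φ t)) := by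
        rw [← Real.exp_add, Real.exp_le_exp]
        have b1 := abs_le.1 (hφbound t0)
        have b2 := abs_le.1 (hφbound t)
        linarith [b1.1, b1.2, b2.1, b2.2]
      have h4 : H t0 * Real.exp (-(2*Φ)) ≤ H t := by
        have hh := mul_le_mul_of_nonneg_left h3 (le_of_lt hpos)
        calc H t0 * Real.exp (-(2*Φ)) ≤ H t0 * (Real.exp (φ t0) * Real.exp (-(φ t))) := hh
          _ = H t0 * Real.exp (φ t0) * Real.exp (-(φ t)) := by ring
          _ ≤ H t := h2
      rw [div_le_iff₀ hC]
      linarith [hHC t, h4]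
    have hlow := hδH t0 ht0
    refine le_antisymm ?_ (hFnn t0)
    nlinarith [hlow, hH0, hδ]
  -- propagate to the whole line
  have hKb : ∀ t, -(2*(m + Wb) * Ff R1 R2 t)
      ≤ 4*Wrad a lam t * Xf R1 R2 t + 4*Prad a m t * Yf R1 R2 t := by
    intro t
    have h1 := neg_abs_le (Wrad a lam t * Xf R1 R2 t)
    have h2 := neg_abs_le (Prad a m t * Yf R1 R2 t)
    nlinarith [hWXb t, hPYb t]
  set G2 : ℝ → ℝ := fun t => Ff R1 R2 t * Real.exp (2*(m + Wb)*t) with hG2def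
  clear_value G2
  have hG2der : ∀ t, HasDerivAt G2
      ((4*Wrad a lam t * Xf R1 R2 t + 4*Prad a m t * Yf R1 R2 t) * Real.exp (2*(m + Wb)*t)
      + Ff R1 R2 t * (Real.exp (2*(m+Wb)*t) * (2*(m+Wb)))) t := by
    intro t
    rw [hG2def]
    have he : HasDerivAt (fun u : ℝ => Real.exp (2*(m+Wb)*u))
        (Real.exp (2*(m+Wb)*t) * (2*(m+Wb))) t := by
      have h := (((hasDerivAt_id t).const_mul (2*(m+Wb))).exp)
      simpa using h
    exact (hsys t).1.mul he
  have hG2mono : Monotone G2 := by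
    apply mono_of_hasDerivAt G2 _ hG2der
    intro t
    have hkb := hKb t
    have hexp := Real.exp_pos (2*(m+Wb)*t)
    linarith [mul_le_mul_of_nonneg_right hkb (le_of_lt hexp), hFnn t]
  have hFzero : ∀ t, Ff R1 R2 t = 0 := by
    intro t
    rcases le_total T t with h | h
    · exact hTail t h
    · have h1 : G2 t ≤ G2 T := hG2mono h
      have h2 : G2 T = 0 := by simp only [hG2def]; rw [hTail T le_rfl, zero_mul]
      have h3 : 0 ≤ G2 t := by
        rw [hG2def]
        exact mul_nonneg (hFnn t) (le_of_lt (Real.exp_pos _))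
      have h4 : G2 t = 0 := le_antisymm (h2 ▸ h1) h3
      simp only [hG2def] at h4
      have hexp : Real.exp (2*(m+Wb)*t) ≠ 0 := ne_of_gt (Real.exp_pos _)
      exact (mul_eq_zero.1 h4).resolve_right hexp
  intro r
  have hF0 := hFzero r
  unfold Ff at hF0
  have h1 : (R1 r).re = 0 := by nlinarith [sq_nonneg (R1 r).re, sq_nonneg (R1 r).im, sq_nonneg (R2 r).re, sq_nonneg (R2 r).im]
  have h2 : (R1 r).im = 0 := by nlinarith [sq_nonneg (R1 r).re, sq_nonneg (R1 r).im, sq_nonneg (R2 r).re, sq_nonneg (R2 r).im]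
  have h3 : (R2 r).re = 0 := by nlinarith [sq_nonneg (R1 r).re, sq_nonneg (R1 r).im, sq_nonneg (R2 r).re, sq_nonneg (R2 r).im]
  have h4 : (R2 r).im = 0 := by nlinarith [sq_nonneg (R1 r).re, sq_nonneg (R1 r).im, sq_nonneg (R2 r).re, sq_nonneg (R2 r).im]
  exact ⟨Complex.ext h1 h2, Complex.ext h3 h4⟩
end
end

section
/- (Prüfer transform of the radial system.) Let R : ℝ → (0,∞) and Ω : ℝ → ℝ be differentiable, and set R₁ = R e^{iΩ/2}, R₂ = R e^{−iΩ/2}. Then (R₁,R₂) satisfies T_rad(R₁,R₂) = E(R₁,R₂) pointwise on ℝ if and only if Ω and R satisfy the first-order system Ω′ = −2( P cosΩ + W sinΩ + V + E ) and R′/R = W cosΩ − P sinΩ pointwise on ℝ. -/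
/- STATEMENT 10 (Prüfer transform of the radial system): with R : ℝ → (0,∞) and
Ω : ℝ → ℝ differentiable, and R₁ = R e^{iΩ/2}, R₂ = R e^{−iΩ/2}, the pair
(R₁,R₂) satisfies T_rad(R₁,R₂) = E(R₁,R₂) pointwise on ℝ if and only if
Ω′ = −2(P cosΩ + W sinΩ + V + E) and R′/R = W cosΩ − P sinΩ pointwise on ℝ. -/

noncomputable section

lemma real_pair_eq_zero {x y : ℝ} : (x:ℂ) + (y:ℂ)*Complex.I = 0 ↔ x = 0 ∧ y = 0 := by
  constructor
  · intro h
    exact ⟨by simpa using congrArg Complex.re h, by simpa using congrArg Complex.im h⟩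
  · rintro ⟨hx, hy⟩; simp [hx, hy]

theorem pruefer_transform_radial (a m lam κ γv E : ℝ) (ha : a ≠ 0) (hm : 0 < m)
    (R Ω : ℝ → ℝ) (hR : Differentiable ℝ R) (hΩ : Differentiable ℝ Ω)
    (hRpos : ∀ r : ℝ, 0 < R r) :
    (∀ r : ℝ, RadEq a m lam κ γv E
        (fun s => (R s : ℂ) * Complex.exp (Complex.I * (Ω s : ℂ) / 2))
        (fun s => (R s : ℂ) * Complex.exp (-Complex.I * (Ω s : ℂ) / 2)) r) ↔
    (∀ r : ℝ,
      deriv Ω r = -2 * (Prad a m r * Real.cos (Ω r) + Wrad a lam r * Real.sin (Ω r)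
        + Vrad a κ γv r + E) ∧
      deriv R r / R r
        = Wrad a lam r * Real.cos (Ω r) - Prad a m r * Real.sin (Ω r)) := by
  apply forall_congr'
  intro r
  have hR0 : R r ≠ 0 := (hRpos r).ne'
  set θ := Ω r with hθdef
  set R0 := R r with hR0def
  set dR := deriv R r with hdRdef
  set dΩ := deriv Ω r with hdΩdef
  set p := Prad a m r with hpdef
  set w := Wrad a lam r with hwdef
  set v := Vrad a κ γv r with hvdef
  set c := Real.cos θ with hcdef
  set sn := Real.sin θ with hsndef
  have hpy : sn^2 + c^2 = 1 := Real.sin_sq_add_cos_sq θ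
  set E1 : ℂ := Complex.exp (Complex.I * (θ:ℂ) / 2) with hE1def
  have hne : E1 ≠ 0 := Complex.exp_ne_zero _
  -- express exp(-Iθ/2) in terms of E1
  have hE : Complex.exp (-Complex.I * (θ:ℂ) / 2) = ((c:ℂ) - (sn:ℂ) * Complex.I) * E1 := by
    have h : ((c : ℂ) - (sn : ℂ) * Complex.I) = Complex.exp ((-θ : ℂ) * Complex.I) := by
      rw [Complex.exp_mul_I, Complex.cos_neg, Complex.sin_neg, ← Complex.ofReal_cos,
        ← Complex.ofReal_sin]
      ring
    rw [h, hE1def, ← Complex.exp_add]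
    congr 1
    ring
  -- derivatives
  have hΩC : HasDerivAt (fun s => ((Ω s : ℂ))) (dΩ : ℂ) r := (hΩ r).hasDerivAt.ofReal_comp
  have hRC : HasDerivAt (fun s => ((R s : ℂ))) (dR : ℂ) r := (hR r).hasDerivAt.ofReal_comp
  have hexp1 : HasDerivAt (fun s => Complex.exp (Complex.I * (Ω s : ℂ) / 2))
      (E1 * (Complex.I * (dΩ : ℂ) / 2)) r := by
    have := (((hΩC.const_mul Complex.I).div_const 2)).cexp
    simpa [hE1def] using this
  have hexp2 : HasDerivAt (fun s => Complex.exp (-Complex.I * (Ω s : ℂ) / 2))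
      (Complex.exp (-Complex.I * (θ:ℂ) / 2) * (-Complex.I * (dΩ : ℂ) / 2)) r := by
    have := (((hΩC.const_mul (-Complex.I)).div_const 2)).cexp
    simpa using this
  have hd1 : deriv (fun s => (R s : ℂ) * Complex.exp (Complex.I * (Ω s : ℂ) / 2)) r
      = (dR : ℂ) * E1 + (R0 : ℂ) * (E1 * (Complex.I * (dΩ : ℂ) / 2)) := by
    have := (hRC.mul hexp1).deriv
    simp only [Pi.mul_def] at this
    exact this
  have hd2 : deriv (fun s => (R s : ℂ) * Complex.exp (-Complex.I * (Ω s : ℂ) / 2)) r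
      = (dR : ℂ) * (((c:ℂ) - (sn:ℂ) * Complex.I) * E1)
        + (R0 : ℂ) * ((((c:ℂ) - (sn:ℂ) * Complex.I) * E1) * (-Complex.I * (dΩ : ℂ) / 2)) := by
    have := (hRC.mul hexp2).deriv
    rw [hE] at this
    simp only [Pi.mul_def] at this
    exact this
  rw [RadEq]
  simp only [← hθdef, ← hR0def, ← hvdef, ← hpdef, ← hwdef]
  simp only [hd1, hd2, hE]
  -- first complex equation ↔ pair
  have key1 : (Complex.I * ((dR : ℂ) * E1 + (R0 : ℂ) * (E1 * (Complex.I * (dΩ : ℂ) / 2)))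
        - (v : ℂ) * ((R0 : ℂ) * E1)
        - ((p : ℂ) + Complex.I * (w : ℂ)) * ((R0 : ℂ) * (((c:ℂ) - (sn:ℂ) * Complex.I) * E1))
      = (E : ℂ) * ((R0 : ℂ) * E1))
      ↔ (dΩ = -2 * (p * c + w * sn + v + E) ∧ dR / R0 = w * c - p * sn) := by
    rw [div_eq_iff hR0]
    constructor
    · intro h
      have h0 : (((-dΩ/2*R0 - v*R0 - (p*c + w*sn)*R0 - E*R0 : ℝ)) : ℂ)
          + (((dR - (w*c - p*sn)*R0 : ℝ)) : ℂ) * Complex.I = 0 := by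
        apply mul_right_cancel₀ hne
        push_cast
        linear_combination h + (-(dΩ:ℂ)*R0*E1/2 - (R0:ℂ)*w*sn*E1) * Complex.I_sq
      obtain ⟨h1, h2⟩ := real_pair_eq_zero.mp h0
      constructor
      · have hz : R0 * (dΩ - (-2 * (p * c + w * sn + v + E))) = 0 := by linarith
        rcases mul_eq_zero.mp hz with h | h
        · exact absurd h hR0
        · linarith
      · linarith
    · rintro ⟨h1, h2⟩
      have h1' := congrArg (Complex.ofReal) h1
      have h2' := congrArg (Complex.ofReal) h2
      push_cast at h1' h2'
      linear_combination (Complex.I * E1) * h2' + (-(R0:ℂ) * E1 / 2) * h1'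
        + ((w:ℂ)*sn*R0*E1 + (dΩ:ℂ)*R0*E1/2) * Complex.I_sq
  have hpyC : (sn:ℂ)^2 + (c:ℂ)^2 = 1 := by exact_mod_cast congrArg (Complex.ofReal) hpy
  constructor
  · rintro ⟨hA, _⟩
    exact key1.mp hA
  · intro hp
    refine ⟨key1.mpr hp, ?_⟩
    obtain ⟨h1, h2div⟩ := hp
    have h2 : dR = (w * c - p * sn) * R0 := (div_eq_iff hR0).mp h2div
    have h1' := congrArg (Complex.ofReal) h1
    have h2' := congrArg (Complex.ofReal) h2
    push_cast at h1' h2'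
    linear_combination (-Complex.I * ((c:ℂ) - sn*Complex.I) * E1) * h2'
      + ((Complex.I^2/2) * (R0:ℂ) * ((c:ℂ) - sn*Complex.I) * E1) * h1'
      + (E1 * (R0:ℂ) * (Complex.I*c*sn*p + Complex.I*w*sn^2 + Complex.I*sn*v + Complex.I*sn*E
          - c*v - c*E - p)) * Complex.I_sq
      + ((-Complex.I*(w:ℂ) - Complex.I^2*p) * E1 * (R0:ℂ)) * hpyC
end
end

section
/- (Prüfer transform of the angular system.) Let S : (0,π) → (0,∞) and Θ : (0,π) → ℝ be differentiable, and set S₁ = S cos(Θ/2), S₂ = S sin(Θ/2). Then (S₁,S₂) satisfies T_ang(S₁,S₂) = λ(S₁,S₂) pointwise on (0,π) if and only if Θ and S satisfy the first-order system Θ′ = −2( λ + m a cosθ · cosΘ + k(θ) sinΘ ) and S′/S = k(θ) cosΘ − m a cosθ · sinΘ pointwise on (0,π). -/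
/- STATEMENT 11 (Prüfer transform of the angular system): with S : (0,π) → (0,∞)
and Θ : (0,π) → ℝ differentiable, and S₁ = S cos(Θ/2), S₂ = S sin(Θ/2), the pair
(S₁,S₂) satisfies T_ang(S₁,S₂) = λ(S₁,S₂) pointwise on (0,π) if and only if
Θ′ = −2(λ + m a cosθ · cosΘ + k(θ) sinΘ) and S′/S = k(θ) cosΘ − m a cosθ · sinΘ
pointwise on (0,π). -/

noncomputable section

/-- k(θ) = a E sinθ − κ/sinθ -/
def kang (a E κ θ : ℝ) : ℝ := a*E*Real.sin θ - κ/Real.sin θ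

/-- the (real) angular eigenvalue equations T_ang (S₁,S₂) = λ (S₁,S₂) at θ -/
def AngEqR (a m E κ lam : ℝ) (S1 S2 : ℝ → ℝ) (θ : ℝ) : Prop :=
  -(m*a*Real.cos θ) * S1 θ - deriv S2 θ - kang a E κ θ * S2 θ = lam * S1 θ ∧
  deriv S1 θ - kang a E κ θ * S1 θ + (m*a*Real.cos θ) * S2 θ = lam * S2 θ

theorem pruefer_transform_angular (a m E κ lam : ℝ) (ha : a ≠ 0) (hm : 0 < m)
    (S Θ : ℝ → ℝ)
    (hS : ∀ θ ∈ Set.Ioo 0 Real.pi, DifferentiableAt ℝ S θ)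
    (hΘ : ∀ θ ∈ Set.Ioo 0 Real.pi, DifferentiableAt ℝ Θ θ)
    (hSpos : ∀ θ ∈ Set.Ioo 0 Real.pi, 0 < S θ) :
    (∀ θ ∈ Set.Ioo 0 Real.pi, AngEqR a m E κ lam
        (fun u => S u * Real.cos (Θ u / 2))
        (fun u => S u * Real.sin (Θ u / 2)) θ) ↔
    (∀ θ ∈ Set.Ioo 0 Real.pi,
      deriv Θ θ = -2 * (lam + m*a*Real.cos θ * Real.cos (Θ θ)
        + kang a E κ θ * Real.sin (Θ θ)) ∧
      deriv S θ / S θ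
        = kang a E κ θ * Real.cos (Θ θ) - m*a*Real.cos θ * Real.sin (Θ θ)) := by
  have key : ∀ θ ∈ Set.Ioo 0 Real.pi,
      (AngEqR a m E κ lam
        (fun u => S u * Real.cos (Θ u / 2))
        (fun u => S u * Real.sin (Θ u / 2)) θ ↔
      (deriv Θ θ = -2 * (lam + m*a*Real.cos θ * Real.cos (Θ θ)
        + kang a E κ θ * Real.sin (Θ θ)) ∧
      deriv S θ / S θ
        = kang a E κ θ * Real.cos (Θ θ) - m*a*Real.cos θ * Real.sin (Θ θ))) := by
    intro θ hθ
    have hSd := (hS θ hθ).hasDerivAt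
    have hΘd := (hΘ θ hθ).hasDerivAt
    have hhalf : HasDerivAt (fun u => Θ u / 2) (deriv Θ θ / 2) θ := hΘd.div_const 2
    have hcos : HasDerivAt (fun u => Real.cos (Θ u / 2))
        (-Real.sin (Θ θ / 2) * (deriv Θ θ / 2)) θ := hhalf.cos
    have hsin : HasDerivAt (fun u => Real.sin (Θ u / 2))
        (Real.cos (Θ θ / 2) * (deriv Θ θ / 2)) θ := hhalf.sin
    have hd1 : deriv (fun u => S u * Real.cos (Θ u / 2)) θ
        = deriv S θ * Real.cos (Θ θ / 2)
          + S θ * (-Real.sin (Θ θ / 2) * (deriv Θ θ / 2)) := (hSd.mul hcos).deriv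
    have hd2 : deriv (fun u => S u * Real.sin (Θ u / 2)) θ
        = deriv S θ * Real.sin (Θ θ / 2)
          + S θ * (Real.cos (Θ θ / 2) * (deriv Θ θ / 2)) := (hSd.mul hsin).deriv
    have hSne : S θ ≠ 0 := (hSpos θ hθ).ne'
    have hpy : Real.sin (Θ θ / 2)^2 + Real.cos (Θ θ / 2)^2 = 1 := Real.sin_sq_add_cos_sq _
    have hcosΘ : Real.cos (Θ θ) = Real.cos (Θ θ / 2)^2 - Real.sin (Θ θ / 2)^2 := by
      have h := Real.cos_two_mul (Θ θ / 2)
      rw [show 2 * (Θ θ / 2) = Θ θ by ring] at h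
      nlinarith [hpy, h]
    have hsinΘ : Real.sin (Θ θ) = 2 * Real.sin (Θ θ / 2) * Real.cos (Θ θ / 2) := by
      have h := Real.sin_two_mul (Θ θ / 2)
      rw [show 2 * (Θ θ / 2) = Θ θ by ring] at h
      exact h
    constructor
    · rintro ⟨h1, h2⟩
      simp only [hd1, hd2] at h1 h2
      constructor
      · have hkey : S θ * deriv Θ θ = S θ * (-2 * (lam + m*a*Real.cos θ * Real.cos (Θ θ)
            + kang a E κ θ * Real.sin (Θ θ))) := by
          rw [hcosΘ, hsinΘ]
          linear_combination (-2*Real.cos (Θ θ / 2))*h1 + (-2*Real.sin (Θ θ / 2))*h2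
            - (S θ * deriv Θ θ + 2*lam*S θ)*hpy
        exact mul_left_cancel₀ hSne hkey
      · rw [div_eq_iff hSne, hcosΘ, hsinΘ]
        linear_combination (-Real.sin (Θ θ / 2))*h1 + (Real.cos (Θ θ / 2))*h2
          - (deriv S θ)*hpy
    · rintro ⟨h1, h2⟩
      rw [div_eq_iff hSne] at h2
      rw [hcosΘ, hsinΘ] at h1 h2
      constructor
      · show -(m*a*Real.cos θ) * (S θ * Real.cos (Θ θ / 2))
            - deriv (fun u => S u * Real.sin (Θ u / 2)) θ
            - kang a E κ θ * (S θ * Real.sin (Θ θ / 2))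
            = lam * (S θ * Real.cos (Θ θ / 2))
        rw [hd2]
        linear_combination (-(S θ * Real.cos (Θ θ / 2))/2)*h1 + (-Real.sin (Θ θ / 2))*h2
          + (m*a*Real.cos θ*S θ*Real.cos (Θ θ / 2) + kang a E κ θ*S θ*Real.sin (Θ θ / 2))*hpy
      · show deriv (fun u => S u * Real.cos (Θ u / 2)) θ
            - kang a E κ θ * (S θ * Real.cos (Θ θ / 2))
            + (m*a*Real.cos θ) * (S θ * Real.sin (Θ θ / 2))
            = lam * (S θ * Real.sin (Θ θ / 2))
        rw [hd1]
        linear_combination (-(S θ * Real.sin (Θ θ / 2))/2)*h1 + (Real.cos (Θ θ / 2))*h2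
          + (kang a E κ θ*S θ*Real.cos (Θ θ / 2) - m*a*Real.cos θ*S θ*Real.sin (Θ θ / 2))*hpy
  constructor
  · intro h θ hθ; exact (key θ hθ).mp (h θ hθ)
  · intro h θ hθ; exact (key θ hθ).mpr (h θ hθ)
end
end
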